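/- Let k be a field, φ an anisotropic form of degree d in n variables over k, and a ∈ k×. Then a is represented by φ over the rational function field k(t) if and only if a is represented by φ over k. In symbols: D(φ_{k(t)}) ∩ k× = D(φ). -/
import Mathlib


open MvPolynomial

/-- A form (polynomial) is anisotropic if its only zero is the trivial one. -/
def Anisotropic {k : Type*} [CommSemiring k] {σ : Type*} (φ : MvPolynomial σ k) : Prop :=
  ∀ x : σ → k, eval x φ = 0 → x = 0

section Aux

variable {S : Type*} [CommSemiring S] {n d : ℕ}

lemma aux_sum_eq {φ : MvPolynomial (Fin n) S} (hφ : φ.IsHomogeneous d)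
    {m : Fin n →₀ ℕ} (hm : MvPolynomial.coeff m φ ≠ 0) : ∑ i, m i = d := by
  have h := hφ hm
  rw [← h, Finsupp.weight_apply]
  simp only [Pi.one_apply, smul_eq_mul, mul_one, Finsupp.sum]
  exact (Finset.sum_subset (Finset.subset_univ _)
    (fun i _ hi => Finsupp.notMem_support_iff.mp hi)).symm

lemma aux_eval_smul {ψ : MvPolynomial (Fin n) S} (hψ : ψ.IsHomogeneous d)
    (c : S) (x : Fin n → S) :
    eval (fun i => c * x i) ψ = c ^ d * eval x ψ := by
  rw [eval_eq', eval_eq', Finset.mul_sum]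
  refine Finset.sum_congr rfl fun m hm => ?_
  have hd : ∑ i, m i = d := aux_sum_eq hψ (mem_support_iff.mp hm)
  simp_rw [mul_pow]
  rw [Finset.prod_mul_distrib, Finset.prod_pow_eq_pow_sum, hd]
  ring

lemma aux_coeff_prod {ι : Type*} (s : Finset ι) (p : ι → Polynomial S) (b : ι → ℕ)
    (h : ∀ i ∈ s, (p i).natDegree ≤ b i) :
    (∏ i ∈ s, p i).coeff (∑ i ∈ s, b i) = ∏ i ∈ s, (p i).coeff (b i) := by
  induction s using Finset.cons_induction with
  | empty => simp
  | cons i s his ih =>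
    rw [Finset.prod_cons, Finset.sum_cons,
      Polynomial.coeff_mul_add_eq_of_natDegree_le (h i (Finset.mem_cons_self _ _))
        ((Polynomial.natDegree_prod_le _ _).trans
          (Finset.sum_le_sum fun j hj => h j (Finset.mem_cons_of_mem hj))),
      ih (fun j hj => h j (Finset.mem_cons_of_mem hj)), Finset.prod_cons]

lemma aux_coeff_eval {φ : MvPolynomial (Fin n) S} (hφ : φ.IsHomogeneous d)
    (f : Fin n → Polynomial S) {e : ℕ} (hf : ∀ i, (f i).natDegree ≤ e) :
    (eval f (map Polynomial.C φ)).coeff (d * e) = eval (fun i => (f i).coeff e) φ := by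
  rw [eval_map, eval₂_eq', eval_eq', Polynomial.finset_sum_coeff]
  refine Finset.sum_congr rfl fun m hm => ?_
  have hd : ∑ i, m i = d := aux_sum_eq hφ (mem_support_iff.mp hm)
  rw [Polynomial.coeff_C_mul]
  congr 1
  have hde : d * e = ∑ i, m i * e := by rw [← Finset.sum_mul, hd]
  rw [hde, aux_coeff_prod _ _ _ (fun i _ =>
    (Polynomial.natDegree_pow_le).trans (Nat.mul_le_mul_left _ (hf i)))]
  exact Finset.prod_congr rfl fun i _ => Polynomial.coeff_pow_of_natDegree_le (hf i)

lemma aux_natDegree_eval {φ : MvPolynomial (Fin n) S} (hφ : φ.IsHomogeneous d)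
    (f : Fin n → Polynomial S) {e : ℕ} (hf : ∀ i, (f i).natDegree ≤ e) :
    (eval f (map Polynomial.C φ)).natDegree ≤ d * e := by
  rw [eval_map, eval₂_eq']
  refine Polynomial.natDegree_sum_le_of_forall_le _ _ fun m hm => ?_
  have hd : ∑ i, m i = d := aux_sum_eq hφ (mem_support_iff.mp hm)
  refine (Polynomial.natDegree_C_mul_le _ _).trans ?_
  refine (Polynomial.natDegree_prod_le _ _).trans ?_
  calc ∑ i, ((f i) ^ m i).natDegree ≤ ∑ i, m i * e :=
        Finset.sum_le_sum fun i _ =>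
          (Polynomial.natDegree_pow_le).trans (Nat.mul_le_mul_left _ (hf i))
    _ = d * e := by rw [← Finset.sum_mul, hd]

end Aux

theorem stmt_9 {k : Type*} [Field k] {n d : ℕ} (φ : MvPolynomial (Fin n) k)
    (hφ : φ.IsHomogeneous d) (han : Anisotropic φ) (a : k) (ha : a ≠ 0) :
    (∃ x : Fin n → RatFunc k, eval x (map (RatFunc.C : k →+* RatFunc k) φ) = RatFunc.C a) ↔
      ∃ x : Fin n → k, eval x φ = a := by
  constructor
  · rintro ⟨x, hx⟩
    rcases Nat.eq_zero_or_pos d with rfl | hdpos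
    · -- degree zero: φ is a constant
      have hφC : φ = C (MvPolynomial.coeff 0 φ) := by
        ext m
        rcases eq_or_ne m 0 with rfl | hm
        · simp
        · rw [coeff_C, if_neg (Ne.symm hm)]
          by_contra hc
          have hsum : ∑ i, m i = 0 := aux_sum_eq hφ hc
          refine hm (Finsupp.ext fun i => ?_)
          have := Finset.sum_eq_zero_iff.mp hsum i (Finset.mem_univ i)
          simpa using this
      rw [hφC] at hx
      rw [map_C, eval_C] at hx
      have hca : MvPolynomial.coeff 0 φ = a := (RatFunc.C (K := k)).injective hx
      exact ⟨0, by rw [hφC, eval_C, hca]⟩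
    · -- main case : d ≥ 1
      set g : Polynomial k := ∏ j, (x j).denom with hg
      have hg0 : g ≠ 0 :=
        Finset.prod_ne_zero_iff.mpr fun j _ => RatFunc.denom_ne_zero _
      set f : Fin n → Polynomial k :=
        fun i => (x i).num * ∏ j ∈ Finset.univ.erase i, (x j).denom with hfdef
      have hfx : ∀ i, algebraMap (Polynomial k) (RatFunc k) (f i)
          = algebraMap (Polynomial k) (RatFunc k) g * x i := by
        intro i
        have key : algebraMap (Polynomial k) (RatFunc k) ((x i).num)
            = x i * algebraMap (Polynomial k) (RatFunc k) ((x i).denom) :=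
          (div_eq_iff (RatFunc.algebraMap_ne_zero (RatFunc.denom_ne_zero (x i)))).mp
            (RatFunc.num_div_denom (x i))
        rw [hg, ← Finset.mul_prod_erase _ _ (Finset.mem_univ i)]
        rw [hfdef, map_mul, map_mul, map_prod, key]
        ring
      set F : Polynomial k := eval f (map Polynomial.C φ) with hF
      have hmapF : algebraMap (Polynomial k) (RatFunc k) F
          = eval (fun i => algebraMap (Polynomial k) (RatFunc k) (f i)) (map RatFunc.C φ) := by
        rw [hF, eval_map, eval_map]
        have := eval₂_comp_left (algebraMap (Polynomial k) (RatFunc k)) Polynomial.C f φ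
        rw [this]
        congr 1
      have hFeq : F = g ^ d * Polynomial.C a := by
        apply IsFractionRing.injective (Polynomial k) (RatFunc k)
        rw [map_mul, map_pow, RatFunc.algebraMap_C, hmapF]
        simp_rw [hfx]
        rw [aux_eval_smul (hφ.map _) _ _, hx]
      have hFne : F ≠ 0 := by
        rw [hFeq]
        exact mul_ne_zero (pow_ne_zero _ hg0) (Polynomial.C_ne_zero.mpr ha)
      obtain ⟨i₀, hi₀⟩ : ∃ i, f i ≠ 0 := by
        by_contra h
        push_neg at h
        apply hFne
        have hf0 : f = fun _ => (0 : Polynomial k) := funext h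
        rw [hF, hf0]
        have := aux_eval_smul (hφ.map (Polynomial.C : k →+* Polynomial k)) 0
          (fun _ => (0 : Polynomial k))
        simp only [zero_mul] at this
        rw [this, zero_pow hdpos.ne', zero_mul]
      set e : ℕ := Finset.univ.sup fun i => (f i).natDegree with he
      have hfe : ∀ i, (f i).natDegree ≤ e := fun i => by
        rw [he]; exact Finset.le_sup (f := fun i => (f i).natDegree) (Finset.mem_univ i)
      obtain ⟨i₁, hi₁deg, hi₁ne⟩ : ∃ i, (f i).natDegree = e ∧ f i ≠ 0 := by
        obtain ⟨i₁, -, hi₁⟩ := Finset.exists_mem_eq_sup Finset.univ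
          ⟨i₀, Finset.mem_univ i₀⟩ fun i => (f i).natDegree
        rcases Nat.eq_zero_or_pos e with he0 | hepos
        · refine ⟨i₀, ?_, hi₀⟩
          have h1 := hfe i₀
          omega
        · refine ⟨i₁, hi₁.symm, fun hzero => ?_⟩
          rw [hzero, Polynomial.natDegree_zero] at hi₁
          omega
      set c : Fin n → k := fun i => (f i).coeff e with hc
      have hcne : c ≠ 0 := by
        intro h
        have : c i₁ = 0 := by rw [h]; rfl
        rw [hc] at this
        simp only [← hi₁deg, Polynomial.coeff_natDegree] at this
        exact hi₁ne (Polynomial.leadingCoeff_eq_zero.mp this)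
      have hevalc : eval c φ ≠ 0 := fun h => hcne (han c h)
      have hcoeff : F.coeff (d * e) = eval c φ := aux_coeff_eval hφ f hfe
      have hdeg : F.natDegree = d * e :=
        le_antisymm (aux_natDegree_eval hφ f hfe)
          (Polynomial.le_natDegree_of_ne_zero (hcoeff ▸ hevalc))
      have hval : eval c φ = a * g.leadingCoeff ^ d := by
        rw [← hcoeff, ← hdeg, Polynomial.coeff_natDegree, hFeq,
          Polynomial.leadingCoeff_mul, Polynomial.leadingCoeff_pow, Polynomial.leadingCoeff_C]
        ring
      have hb : g.leadingCoeff ≠ 0 := Polynomial.leadingCoeff_ne_zero.mpr hg0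
      refine ⟨fun i => g.leadingCoeff⁻¹ * c i, ?_⟩
      rw [aux_eval_smul hφ _ _, hval, inv_pow]
      field_simp
  · rintro ⟨x, hx⟩
    refine ⟨fun i => RatFunc.C (x i), ?_⟩
    rw [eval_map]
    have h := eval₂_comp_left (RatFunc.C : k →+* RatFunc k) (RingHom.id k) x φ
    rw [eval₂_id, RingHom.comp_id] at h
    rw [show (fun i => RatFunc.C (x i)) = (RatFunc.C : k →+* RatFunc k) ∘ x from rfl,
      ← h, hx]
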